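/- Let n ≥ 1, let ε ∈ (0, 1), and let f : ℝ^n → ℝ be a continuous bounded function with f ≥ 0. Define f_ε(x) = min(|x|^ε, f(x)) and f_{−ε}(x) = max(f(x) − |x|^ε, 0), where |x| is the Euclidean norm, so f = f_ε + f_{−ε}. Then for every Schwartz function φ : ℝ^n → ℂ there exists C > 0 such that for all s > 0: |∫_{ℝ^n} f_ε(x)·φ(s⁻¹x) dx| ≤ C·s^(n+ε) and |∫_{ℝ^n} f_{−ε}(x)·φ(s⁻¹x) dx| ≤ C·s^(n−ε). (That is, the distribution f_ε·dx is weakly homogeneous of degree n + ε and f_{−ε}·dx is weakly homogeneous of degree n − ε for the dilation action on ℝ^n.) -/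

import Mathlib

open MeasureTheory Metric

/-- Let `n ≥ 1`, `ε ∈ (0,1)`, and let `f : ℝ^n → ℝ` be continuous, bounded and
nonnegative. With `f_ε(x) = min(|x|^ε, f(x))` and `f_{−ε}(x) = max(f(x) − |x|^ε, 0)`
(Euclidean norm), the distribution `f_ε·dx` is weakly homogeneous of degree `n + ε` and
`f_{−ε}·dx` is weakly homogeneous of degree `n − ε` for the dilation action. -/
theorem stmt_17 (n : ℕ) (hn : 1 ≤ n) (ε : ℝ) (hε : 0 < ε) (hε1 : ε < 1)
    (f : EuclideanSpace ℝ (Fin n) → ℝ)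
    (hfc : Continuous f) (hfb : ∃ M : ℝ, ∀ x, f x ≤ M) (hf0 : ∀ x, 0 ≤ f x) :
    ∀ φ : SchwartzMap (EuclideanSpace ℝ (Fin n)) ℂ, ∃ C : ℝ, 0 < C ∧
      ∀ s : ℝ, 0 < s →
        ‖∫ x : EuclideanSpace ℝ (Fin n),
            ((min (‖x‖ ^ ε) (f x) : ℝ) : ℂ) * φ (s⁻¹ • x)‖ ≤ C * s ^ ((n : ℝ) + ε) ∧
        ‖∫ x : EuclideanSpace ℝ (Fin n),
            ((max (f x - ‖x‖ ^ ε) 0 : ℝ) : ℂ) * φ (s⁻¹ • x)‖ ≤ C * s ^ ((n : ℝ) - ε) := by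
  intro φ
  obtain ⟨M, hM⟩ := hfb
  have _dummy : True := trivial
  set M' : ℝ := max M 1 with hM'def
  have hM'1 : (1 : ℝ) ≤ M' := le_max_right _ _
  have hM'0 : (0 : ℝ) < M' := lt_of_lt_of_le one_pos hM'1
  have hfM' : ∀ x, f x ≤ M' := fun x => (hM x).trans (le_max_left _ _)
  set R : ℝ := M' ^ (1 / ε) with hRdef
  have hR1 : (1 : ℝ) ≤ R := Real.one_le_rpow hM'1 (by positivity)
  have hR0 : (0 : ℝ) < R := lt_of_lt_of_le one_pos hR1
  have hRε : R ^ ε = M' := by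
    rw [hRdef, ← Real.rpow_mul hM'0.le, one_div, inv_mul_cancel₀ hε.ne', Real.rpow_one]
  have hd : Module.finrank ℝ (EuclideanSpace ℝ (Fin n)) = n := finrank_euclideanSpace_fin
  -- constants coming from φ
  have hint1 : Integrable (fun y : EuclideanSpace ℝ (Fin n) => (1 + ‖y‖) * ‖φ y‖) := by
    have h0 : Integrable (fun y : EuclideanSpace ℝ (Fin n) => ‖φ y‖) := φ.integrable.norm
    have h1 : Integrable (fun y : EuclideanSpace ℝ (Fin n) => ‖y‖ ^ 1 * ‖φ y‖) := φ.integrable_pow_mul volume 1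
    exact (h0.add h1).congr (Filter.Eventually.of_forall fun y => by simp [Pi.add_apply, add_mul, pow_one, one_mul])
  set I : ℝ := ∫ y : EuclideanSpace ℝ (Fin n), (1 + ‖y‖) * ‖φ y‖ with hIdef
  have hI0 : 0 ≤ I := integral_nonneg fun y => by positivity
  set J : ℝ := ∫ y : EuclideanSpace ℝ (Fin n), ‖φ y‖ with hJdef
  have hJ0 : 0 ≤ J := integral_nonneg fun y => norm_nonneg _
  obtain ⟨K, hK0, hK⟩ := φ.decay 0 0
  have hKφ : ∀ x, ‖φ x‖ ≤ K := by
    intro x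
    have := hK x
    simpa [norm_iteratedFDeriv_zero] using this
  set V : ℝ := (volume (ball (0 : EuclideanSpace ℝ (Fin n)) 1)).toReal with hVdef
  have hV0 : 0 ≤ V := ENNReal.toReal_nonneg
  set C : ℝ := I + M' * (J + K * R ^ n * V) + 1 with hCdef
  have hC0 : 0 < C := by
    have h1 : 0 ≤ M' * (J + K * R ^ n * V) := by
      apply mul_nonneg hM'0.le
      have : 0 ≤ K * R ^ n * V := by positivity
      linarith
    linarith
  refine ⟨C, hC0, fun s hs => ?_⟩
  have hsx : ∀ x : EuclideanSpace ℝ (Fin n), s • s⁻¹ • x = x := fun x => by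
    rw [smul_smul, mul_inv_cancel₀ hs.ne', one_smul]
  have hnorm_smul : ∀ y : EuclideanSpace ℝ (Fin n), ‖s • y‖ = s * ‖y‖ := fun y => by
    rw [norm_smul, Real.norm_eq_abs, abs_of_pos hs]
  have hrpow_n : s ^ (n : ℝ) = s ^ n := Real.rpow_natCast s n
  constructor
  · -- degree n + ε
    set F : EuclideanSpace ℝ (Fin n) → ℂ := fun y => ((min (‖s • y‖ ^ ε) (f (s • y)) : ℝ) : ℂ) * φ y with hFdef
    have heq : (∫ x : EuclideanSpace ℝ (Fin n), ((min (‖x‖ ^ ε) (f x) : ℝ) : ℂ) * φ (s⁻¹ • x))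
        = ∫ x : EuclideanSpace ℝ (Fin n), F (s⁻¹ • x) := by
      simp only [hFdef, hsx]
    rw [heq, Measure.integral_comp_inv_smul_of_nonneg volume F hs.le, hd]
    have hFb : ∀ y : EuclideanSpace ℝ (Fin n), ‖F y‖ ≤ s ^ ε * ((1 + ‖y‖) * ‖φ y‖) := by
      intro y
      have h1 : 0 ≤ min (‖s • y‖ ^ ε) (f (s • y)) :=
        le_min (Real.rpow_nonneg (norm_nonneg _) _) (hf0 _)
      have h2 : min (‖s • y‖ ^ ε) (f (s • y)) ≤ s ^ ε * (1 + ‖y‖) := by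
        refine (min_le_left _ _).trans ?_
        rw [hnorm_smul y, Real.mul_rpow hs.le (norm_nonneg _)]
        apply mul_le_mul_of_nonneg_left _ (Real.rpow_nonneg hs.le _)
        rcases le_or_gt ‖y‖ 1 with h | h
        · have : ‖y‖ ^ ε ≤ 1 := Real.rpow_le_one (norm_nonneg _) h hε.le
          linarith [norm_nonneg y]
        · have : ‖y‖ ^ ε ≤ ‖y‖ ^ (1 : ℝ) :=
            Real.rpow_le_rpow_of_exponent_le h.le hε1.le
          rw [Real.rpow_one] at this
          linarith
      calc ‖F y‖ = min (‖s • y‖ ^ ε) (f (s • y)) * ‖φ y‖ := by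
            rw [hFdef]
            simp [norm_mul, Complex.norm_real, Real.norm_eq_abs, abs_of_nonneg h1]
        _ ≤ (s ^ ε * (1 + ‖y‖)) * ‖φ y‖ :=
            mul_le_mul_of_nonneg_right h2 (norm_nonneg _)
        _ = s ^ ε * ((1 + ‖y‖) * ‖φ y‖) := by ring
    have hbound : ‖∫ y : EuclideanSpace ℝ (Fin n), F y‖ ≤ s ^ ε * I := by
      refine (norm_integral_le_integral_norm F).trans ?_
      have : (∫ y : EuclideanSpace ℝ (Fin n), ‖F y‖) ≤ ∫ y : EuclideanSpace ℝ (Fin n), s ^ ε * ((1 + ‖y‖) * ‖φ y‖) := by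
        refine integral_mono_of_nonneg (Filter.Eventually.of_forall fun y => norm_nonneg _)
          (hint1.const_mul _) (Filter.Eventually.of_forall hFb)
      rw [integral_const_mul] at this
      exact this
    calc ‖(s ^ n : ℝ) • ∫ y : EuclideanSpace ℝ (Fin n), F y‖ = s ^ n * ‖∫ y : EuclideanSpace ℝ (Fin n), F y‖ := by
          rw [norm_smul, Real.norm_eq_abs, abs_of_pos (pow_pos hs n)]
      _ ≤ s ^ n * (s ^ ε * I) :=
          mul_le_mul_of_nonneg_left hbound (pow_pos hs n).le
      _ = I * (s ^ (n : ℝ) * s ^ ε) := by rw [hrpow_n]; ring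
      _ = I * s ^ ((n : ℝ) + ε) := by rw [← Real.rpow_add hs]
      _ ≤ C * s ^ ((n : ℝ) + ε) := by
          apply mul_le_mul_of_nonneg_right _ (Real.rpow_nonneg hs.le _)
          have h1 : 0 ≤ M' * (J + K * R ^ n * V) := by
            apply mul_nonneg hM'0.le
            have : 0 ≤ K * R ^ n * V := by positivity
            linarith
          rw [hCdef]; linarith
  · -- degree n - ε
    set G : EuclideanSpace ℝ (Fin n) → ℂ := fun y => ((max (f (s • y) - ‖s • y‖ ^ ε) 0 : ℝ) : ℂ) * φ y with hGdef
    have heq : (∫ x : EuclideanSpace ℝ (Fin n), ((max (f x - ‖x‖ ^ ε) 0 : ℝ) : ℂ) * φ (s⁻¹ • x))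
        = ∫ x : EuclideanSpace ℝ (Fin n), G (s⁻¹ • x) := by
      simp only [hGdef, hsx]
    rw [heq, Measure.integral_comp_inv_smul_of_nonneg volume G hs.le, hd]
    -- pointwise bound by an indicator
    have hGb : ∀ y : EuclideanSpace ℝ (Fin n), ‖G y‖ ≤
        Set.indicator (closedBall (0 : EuclideanSpace ℝ (Fin n)) (R / s)) (fun y => M' * ‖φ y‖) y := by
      intro y
      have hg0 : 0 ≤ max (f (s • y) - ‖s • y‖ ^ ε) 0 := le_max_right _ _
      have hGnorm : ‖G y‖ = max (f (s • y) - ‖s • y‖ ^ ε) 0 * ‖φ y‖ := by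
        rw [hGdef]
        simp [norm_mul, Complex.norm_real, Real.norm_eq_abs, abs_of_nonneg hg0]
      by_cases hy : y ∈ closedBall (0 : EuclideanSpace ℝ (Fin n)) (R / s)
      · rw [Set.indicator_of_mem hy, hGnorm]
        apply mul_le_mul_of_nonneg_right _ (norm_nonneg _)
        apply max_le _ hM'0.le
        have := Real.rpow_nonneg (norm_nonneg (s • y)) ε
        linarith [hfM' (s • y)]
      · rw [Set.indicator_of_notMem hy, hGnorm]
        have hy' : R / s < ‖y‖ := by
          by_contra h
          exact hy (mem_closedBall_zero_iff.2 (not_lt.1 h))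
        have hRy : R < s * ‖y‖ := by
          rw [div_lt_iff₀ hs] at hy'
          linarith [hy']
        have h1 : R ^ ε < ‖s • y‖ ^ ε := by
          rw [hnorm_smul]
          exact Real.rpow_lt_rpow hR0.le hRy hε
        have h2 : f (s • y) - ‖s • y‖ ^ ε ≤ 0 := by
          rw [hRε] at h1
          linarith [hfM' (s • y)]
        rw [max_eq_right h2, zero_mul]
    have hbound : ‖∫ y : EuclideanSpace ℝ (Fin n), G y‖ ≤ M' * ∫ y in closedBall (0 : EuclideanSpace ℝ (Fin n)) (R / s), ‖φ y‖ := by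
      refine (norm_integral_le_integral_norm G).trans ?_
      have hind : Integrable
          (Set.indicator (closedBall (0 : EuclideanSpace ℝ (Fin n)) (R / s)) (fun y => M' * ‖φ y‖)) :=
        (φ.integrable.norm.const_mul M').indicator measurableSet_closedBall
      have h1 : (∫ y : EuclideanSpace ℝ (Fin n), ‖G y‖) ≤
          ∫ y : EuclideanSpace ℝ (Fin n), Set.indicator (closedBall (0 : EuclideanSpace ℝ (Fin n)) (R / s)) (fun y => M' * ‖φ y‖) y :=
        integral_mono_of_nonneg (Filter.Eventually.of_forall fun y => norm_nonneg _)
          hind (Filter.Eventually.of_forall hGb)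
      rw [integral_indicator measurableSet_closedBall, integral_const_mul] at h1
      exact h1
    rcases le_or_gt s 1 with hs1 | hs1
    · -- small s : use integral of ‖φ‖ over all space
      have h2 : (∫ y in closedBall (0 : EuclideanSpace ℝ (Fin n)) (R / s), ‖φ y‖) ≤ J :=
        setIntegral_le_integral φ.integrable.norm
          (Filter.Eventually.of_forall fun y => norm_nonneg _)
      have hsn : s ^ n ≤ s ^ ((n : ℝ) - ε) := by
        rw [← hrpow_n]
        exact Real.rpow_le_rpow_of_exponent_ge hs hs1 (by linarith)
      calc ‖(s ^ n : ℝ) • ∫ y : EuclideanSpace ℝ (Fin n), G y‖ = s ^ n * ‖∫ y : EuclideanSpace ℝ (Fin n), G y‖ := by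
            rw [norm_smul, Real.norm_eq_abs, abs_of_pos (pow_pos hs n)]
        _ ≤ s ^ n * (M' * J) := by
            apply mul_le_mul_of_nonneg_left _ (pow_pos hs n).le
            exact hbound.trans (mul_le_mul_of_nonneg_left h2 hM'0.le)
        _ ≤ s ^ ((n : ℝ) - ε) * (M' * J) := by
            apply mul_le_mul_of_nonneg_right hsn
            exact mul_nonneg hM'0.le hJ0
        _ ≤ C * s ^ ((n : ℝ) - ε) := by
            rw [mul_comm]
            apply mul_le_mul_of_nonneg_right _ (Real.rpow_nonneg hs.le _)
            have h3 : 0 ≤ K * R ^ n * V := by positivity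
            have h4 : M' * J ≤ M' * (J + K * R ^ n * V) := by nlinarith
            rw [hCdef]; linarith
    · -- large s : use volume of the ball
      have hvol : (volume (closedBall (0 : EuclideanSpace ℝ (Fin n)) (R / s))).toReal = (R / s) ^ n * V := by
        rw [Measure.addHaar_closedBall volume (0 : EuclideanSpace ℝ (Fin n)) (by positivity : (0:ℝ) ≤ R / s), hd,
          hVdef, ENNReal.toReal_mul, ENNReal.toReal_ofReal (by positivity)]
      have hmeas : volume (closedBall (0 : EuclideanSpace ℝ (Fin n)) (R / s)) ≠ ⊤ := measure_closedBall_lt_top.ne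
      have h2 : (∫ y in closedBall (0 : EuclideanSpace ℝ (Fin n)) (R / s), ‖φ y‖) ≤ K * ((R / s) ^ n * V) := by
        have hmono : (∫ y in closedBall (0 : EuclideanSpace ℝ (Fin n)) (R / s), ‖φ y‖)
            ≤ ∫ _y in closedBall (0 : EuclideanSpace ℝ (Fin n)) (R / s), K :=
          setIntegral_mono_on φ.integrable.norm.integrableOn
            (integrableOn_const hmeas) measurableSet_closedBall
            (fun y _ => hKφ y)
        rw [setIntegral_const, smul_eq_mul, measureReal_def, hvol] at hmono
        calc (∫ y in closedBall (0 : EuclideanSpace ℝ (Fin n)) (R / s), ‖φ y‖)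
            ≤ (R / s) ^ n * V * K := hmono
          _ = K * ((R / s) ^ n * V) := by ring
      have hfinal : s ^ n * (M' * (K * ((R / s) ^ n * V))) = M' * (K * R ^ n * V) := by
        have h := pow_ne_zero n hs.ne'
        have hc : R ^ n / s ^ n * s ^ n = R ^ n := div_mul_cancel₀ _ h
        calc s ^ n * (M' * (K * ((R / s) ^ n * V)))
            = (R ^ n / s ^ n * s ^ n) * (M' * (K * V)) := by rw [div_pow]; ring
          _ = M' * (K * R ^ n * V) := by rw [hc]; ring
      have hn1 : (1 : ℝ) ≤ (n : ℝ) := by exact_mod_cast hn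
      have hs1' : (1 : ℝ) ≤ s ^ ((n : ℝ) - ε) :=
        Real.one_le_rpow hs1.le (by linarith)
      calc ‖(s ^ n : ℝ) • ∫ y : EuclideanSpace ℝ (Fin n), G y‖ = s ^ n * ‖∫ y : EuclideanSpace ℝ (Fin n), G y‖ := by
            rw [norm_smul, Real.norm_eq_abs, abs_of_pos (pow_pos hs n)]
        _ ≤ s ^ n * (M' * (K * ((R / s) ^ n * V))) := by
            apply mul_le_mul_of_nonneg_left _ (pow_pos hs n).le
            exact hbound.trans (mul_le_mul_of_nonneg_left h2 hM'0.le)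
        _ = M' * (K * R ^ n * V) := by rw [hfinal]
        _ ≤ C * 1 := by
            rw [mul_one, hCdef]
            have e : M' * (J + K * R ^ n * V) = M' * J + M' * (K * R ^ n * V) := by ring
            linarith [mul_nonneg hM'0.le hJ0, hI0]
        _ ≤ C * s ^ ((n : ℝ) - ε) :=
            mul_le_mul_of_nonneg_left hs1' hC0.le
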